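/- For all integers m ≥ 1 and k ≥ m+1, one has k − m ≠ 2^{k−m−2}·U_m. (Equivalently, the unique real root κ(m) ≥ m+1 of the equation x − m = 2^{x−m−2}·U_m is never an integer.) -/

import Mathlib

open Finset

/-- The value of column `j` (0-indexed) of the matrix
`H_k = [H_k^(k-1) | H_k^(k-2) | … | H_k^(0)]`, read as a `k`-bit integer with
row 1 as the most significant bit.  (Column `c` of the block `H_k^(m)` is the
vector `(0,…,0,1,binary_m(c))`, i.e. the integer `2^m + c`; the block `H_k^(m)`
occupies global columns `[2^k - 2^(m+1), 2^k - 2^m)`, so that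
`m = ⌊log₂ (2^k - 1 - j)⌋` and the value is `3·2^m + j - 2^k`.) -/
def colVal (k j : ℕ) : ℕ := 3 * 2 ^ Nat.log2 (2 ^ k - 1 - j) + j - 2 ^ k

/-- Row `i` (1-indexed, `1 ≤ i ≤ k`) of the matrix `H_k(n)` consisting of the
first `n` columns of `H_k`. -/
def Hrow (k n : ℕ) (i : ℕ) : Fin n → ZMod 2 :=
  fun j => if Nat.testBit (colVal k j) (k - i) then 1 else 0

/-- The code `S_{n,k}`: the binary linear code spanned by the rows of `H_k(n)`. -/
def SCode (k n : ℕ) : Submodule (ZMod 2) (Fin n → ZMod 2) :=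
  Submodule.span (ZMod 2) (Set.range fun i : Fin k => Hrow k n ((i : ℕ) + 1))

/-- `w_i`: the Hamming weight of the `i`-th (1-indexed) row of `H_k(n)`. -/
def rowWt (k n i : ℕ) : ℕ := hammingNorm (Hrow k n i)

/-- `α_i`: the `i`-th entry (1-indexed) of the last (`n`-th) column of `H_k(n)`;
`true` encodes `1` and `false` encodes `0`. -/
def alphaBit (k n i : ℕ) : Bool := Nat.testBit (colVal k (n - 1)) (k - i)

/-- Row `i` (1-indexed) of the matrix `M_{n,k}`, whose `j`-th column
(0-indexed) is the `k`-bit binary representation of `2^k - 1 - j`, MSB first. -/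
def Mrow (k n : ℕ) (i : ℕ) : Fin n → ZMod 2 :=
  fun j => if Nat.testBit (2 ^ k - 1 - (j : ℕ)) (k - i) then 1 else 0

/-- The code `D_{n,k}`: the binary linear code spanned by the rows of `M_{n,k}`. -/
def DCode (k n : ℕ) : Submodule (ZMod 2) (Fin n → ZMod 2) :=
  Submodule.span (ZMod 2) (Set.range fun i : Fin k => Mrow k n ((i : ℕ) + 1))

/-- The value of column `j` (0-indexed) of the generalized matrix consisting of
`t-1` copies of `H_k^(k-1)` followed by `H_k(n')`, where `n = 2^(k-1)·(t-1) + n'`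
with `2^(k-1) ≤ n' ≤ 2^k - 1` (so `t - 1 = (n - 2^(k-1)) / 2^(k-1)`). -/
def gcolVal (k n j : ℕ) : ℕ :=
  if j < (n - 2 ^ (k - 1)) / 2 ^ (k - 1) * 2 ^ (k - 1) then
    2 ^ (k - 1) + j % 2 ^ (k - 1)
  else colVal k (j - (n - 2 ^ (k - 1)) / 2 ^ (k - 1) * 2 ^ (k - 1))

/-- The generalized code `S_{n,k}`, defined for every `n ≥ 2^(k-1)`:
the span of the rows of the `k × n` matrix obtained by concatenating `t-1`
copies of `H_k^(k-1)` followed by `H_k(n')`. -/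
def GSCode (k n : ℕ) : Submodule (ZMod 2) (Fin n → ZMod 2) :=
  Submodule.span (ZMod 2)
    (Set.range fun i : Fin k => fun j : Fin n =>
      if Nat.testBit (gcolVal k n (j : ℕ)) (k - ((i : ℕ) + 1)) then (1 : ZMod 2) else 0)

/-- The minimum distance of a binary linear code: the least Hamming weight of a
nonzero codeword. -/
noncomputable def minDist {n : ℕ} (C : Submodule (ZMod 2) (Fin n → ZMod 2)) : ℕ :=
  sInf {w | ∃ c ∈ C, c ≠ 0 ∧ hammingNorm c = w}

/-- `A_w`: the number of codewords of `C` of Hamming weight `w`. -/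
noncomputable def numWt {n : ℕ} (C : Submodule (ZMod 2) (Fin n → ZMod 2)) (w : ℕ) : ℕ :=
  Set.ncard {c : Fin n → ZMod 2 | c ∈ C ∧ hammingNorm c = w}

/-- The undetected error probability
`P_ue(C,p) = Σ_{w=1}^n A_w p^w (1-p)^(n-w)`. -/
noncomputable def Pue {n : ℕ} (C : Submodule (ZMod 2) (Fin n → ZMod 2)) (p : ℝ) : ℝ :=
  ∑ w ∈ Finset.Icc 1 n, (numWt C w : ℝ) * p ^ w * (1 - p) ^ (n - w)

/-- A code is proper if `p ↦ P_ue(C,p)` is monotonically increasing on `[0, 1/2]`. -/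
def IsProper {n : ℕ} (C : Submodule (ZMod 2) (Fin n → ZMod 2)) : Prop :=
  MonotoneOn (Pue C) (Set.Icc (0 : ℝ) (1 / 2))

/-- An `[n,k]` code is satisfactory if `P_ue(C,p) ≤ 2^(k-n)` for all `p ∈ [0,1/2]`. -/
def IsSatisfactory (k : ℕ) {n : ℕ} (C : Submodule (ZMod 2) (Fin n → ZMod 2)) : Prop :=
  ∀ p ∈ Set.Icc (0 : ℝ) (1 / 2), Pue C p ≤ (2 : ℝ) ^ ((k : ℤ) - (n : ℤ))

/-- The binary entropy function `h(x) = -x log₂ x - (1-x) log₂ (1-x)`. -/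
noncomputable def binEnt (x : ℝ) : ℝ :=
  -(x * Real.logb 2 x) - (1 - x) * Real.logb 2 (1 - x)

/-- `U_m = (2^(m+2) - 3)·(1 - h((2^(m+1) - 2)/(2^(m+2) - 3)))`. -/
noncomputable def Ufun (m : ℕ) : ℝ :=
  ((2 : ℝ) ^ (m + 2) - 3) * (1 - binEnt (((2 : ℝ) ^ (m + 1) - 2) / ((2 : ℝ) ^ (m + 2) - 3)))

/-- For all integers `m ≥ 1` and `k ≥ m + 1`,
`k - m ≠ 2^(k-m-2)·U_m`; i.e. the root `κ(m)` of `x - m = 2^(x-m-2)·U_m` is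
never an integer. -/
theorem stmt12 (m k : ℕ) (hm : 1 ≤ m) (hk : m + 1 ≤ k) :
    ((k : ℝ) - (m : ℝ)) ≠ (2 : ℝ) ^ ((k : ℤ) - (m : ℤ) - 2) * Ufun m := by
  intro hEq
  set d : ℕ := k - m with hddef
  have hd1 : 1 ≤ d := by omega
  have hdR : (k : ℝ) - m = (d : ℝ) := by
    have h1 : (d : ℤ) = (k : ℤ) - m := by omega
    have h2 := congrArg (fun z : ℤ => (z : ℝ)) h1
    push_cast at h2
    linarith
  have hdZ : (k : ℤ) - (m : ℤ) - 2 = (d : ℤ) - 2 := by omega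
  rw [hdR, hdZ] at hEq
  have hpm : (2:ℕ) ≤ 2 ^ m := by
    calc (2:ℕ) = 2 ^ 1 := rfl
    _ ≤ 2 ^ m := Nat.pow_le_pow_right (by norm_num) hm
  set t : ℕ := 2 ^ m with htdef
  set a : ℕ := 2 * t - 2 with hadef
  set b : ℕ := 2 * t - 1 with hbdef
  set c : ℕ := 4 * t - 3 with hcdef
  have ha2 : 2 ≤ a := by omega
  have hb3 : 3 ≤ b := by omega
  have hc5 : 5 ≤ c := by omega
  have htR : (t : ℝ) = 2 ^ m := by rw [htdef]; push_cast; ring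
  have haR : (a : ℝ) = 2 ^ (m+1) - 2 := by
    rw [hadef, Nat.cast_sub (by omega)]; push_cast [htR]; ring
  have hbR : (b : ℝ) = 2 ^ (m+1) - 1 := by
    rw [hbdef, Nat.cast_sub (by omega)]; push_cast [htR]; ring
  have hcR : (c : ℝ) = 2 ^ (m+2) - 3 := by
    rw [hcdef, Nat.cast_sub (by omega)]; push_cast [htR]; ring
  have ha0 : (a : ℝ) ≠ 0 := Nat.cast_ne_zero.mpr (by omega)
  have hb0 : (b : ℝ) ≠ 0 := Nat.cast_ne_zero.mpr (by omega)
  have hc0 : (c : ℝ) ≠ 0 := Nat.cast_ne_zero.mpr (by omega)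
  have hab : (a : ℝ) + b = c := by rw [haR, hbR, hcR]; ring
  have hx : ((2:ℝ)^(m+1) - 2)/((2:ℝ)^(m+2) - 3) = (a:ℝ)/c := by rw [haR, hcR]
  have h1x : 1 - (a:ℝ)/c = (b:ℝ)/c := by
    field_simp
    linarith
  -- the log terms
  have hU : Ufun m = (c:ℝ) +
      ((a:ℝ) * Real.logb 2 a + (b:ℝ) * Real.logb 2 b - (c:ℝ) * Real.logb 2 c) := by
    unfold Ufun binEnt
    rw [hx, ← hcR, h1x, Real.logb_div ha0 hc0, Real.logb_div hb0 hc0]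
    have expand : (c:ℝ) * (1 - (-((a:ℝ)/c * (Real.logb 2 a - Real.logb 2 c)) -
        (b:ℝ)/c * (Real.logb 2 b - Real.logb 2 c))) =
        (c:ℝ) + (a:ℝ)*(Real.logb 2 a - Real.logb 2 c) + (b:ℝ)*(Real.logb 2 b - Real.logb 2 c) := by
      field_simp; ring
    rw [expand]
    linear_combination (-(Real.logb 2 (c:ℝ))) * hab
  set X : ℕ := a ^ a * b ^ b with hXdef
  set Y : ℕ := c ^ c with hYdef
  have hX0 : (X : ℝ) ≠ 0 := Nat.cast_ne_zero.mpr (by positivity)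
  have hY0 : (Y : ℝ) ≠ 0 := Nat.cast_ne_zero.mpr (by positivity)
  have hXR : (X : ℝ) = (a:ℝ)^(a:ℕ) * (b:ℝ)^(b:ℕ) := by rw [hXdef]; push_cast; ring
  have hYR : (Y : ℝ) = (c:ℝ)^(c:ℕ) := by rw [hYdef]; push_cast; ring
  have hlogX : Real.logb 2 (X:ℝ) = (a:ℝ) * Real.logb 2 a + (b:ℝ) * Real.logb 2 b := by
    rw [hXR, Real.logb_mul (pow_ne_zero _ ha0) (pow_ne_zero _ hb0),
      Real.logb_pow, Real.logb_pow]
  have hlogY : Real.logb 2 (Y:ℝ) = (c:ℝ) * Real.logb 2 c := by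
    rw [hYR, Real.logb_pow]
  have hLdiv : Real.logb 2 ((X:ℝ)/Y) =
      (a:ℝ) * Real.logb 2 a + (b:ℝ) * Real.logb 2 b - (c:ℝ) * Real.logb 2 c := by
    rw [Real.logb_div hX0 hY0, hlogX, hlogY]
  have hP : (0:ℝ) < (2:ℝ) ^ ((d:ℤ) - 2) := by positivity
  have hL : Real.logb 2 ((X:ℝ)/Y) = (d:ℝ) * ((2:ℝ) ^ ((d:ℤ) - 2))⁻¹ - c := by
    rw [hU] at hEq
    rw [hLdiv]
    have h2 : (d:ℝ) = (2:ℝ) ^ ((d:ℤ)-2) * c + (2:ℝ) ^ ((d:ℤ)-2) *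
        ((a:ℝ) * Real.logb 2 a + (b:ℝ) * Real.logb 2 b - (c:ℝ) * Real.logb 2 c) := by
      rw [hEq]; ring
    field_simp
    linarith [h2]
  have hXYpos : (0:ℝ) < (X:ℝ)/Y := by
    apply div_pos <;> [skip; skip] <;>
      exact lt_of_le_of_ne (Nat.cast_nonneg _) (Ne.symm (by assumption))
  -- the exponent arithmetic
  have hfour : ((2:ℝ) ^ ((d:ℤ) - 2))⁻¹ * (2:ℝ) ^ (d:ℕ) = 4 := by
    rw [← zpow_natCast (2:ℝ) d, ← zpow_neg, ← zpow_add₀ (two_ne_zero)]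
    have : -((d:ℤ) - 2) + (d:ℤ) = 2 := by ring
    rw [this]
    norm_num
  have hexp : (Real.logb 2 ((X:ℝ)/Y)) * ((2:ℝ) ^ (d:ℕ)) = 4*(d:ℝ) - (c:ℝ) * 2 ^ (d:ℕ) := by
    rw [hL]
    linear_combination (d:ℝ) * hfour
  have hd2 : d < 2 ^ d := Nat.lt_two_pow_self (n := d)
  have he' : 4 * d < c * 2 ^ d := by
    calc 4 * d < 4 * 2 ^ d := by omega
    _ ≤ c * 2 ^ d := Nat.mul_le_mul_right _ (by omega)
  set e : ℕ := c * 2 ^ d - 4 * d with hedef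
  have he : 4 * d + e = c * 2 ^ d := by omega
  have he1 : 1 ≤ e := by omega
  have hexpe : (4:ℝ)*(d:ℝ) - (c:ℝ) * 2 ^ (d:ℕ) = -(e:ℝ) := by
    have := congrArg (fun n : ℕ => (n : ℝ)) he
    push_cast at this
    linarith
  -- raise to the power 2^d
  have key : ((X:ℝ)/Y) ^ ((2:ℕ)^d) = (2:ℝ) ^ (-(e:ℝ)) := by
    rw [← Real.rpow_logb (b := 2) (x := (X:ℝ)/Y) (by norm_num) (by norm_num) hXYpos]
    rw [← Real.rpow_natCast ((2:ℝ) ^ Real.logb 2 ((X:ℝ)/Y)) (2^d),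
      ← Real.rpow_mul (by norm_num)]
    congr 1
    push_cast
    rw [hexp] at *
    push_cast at hexp ⊢
    linarith [hexpe]
  have key2 : (X:ℝ) ^ ((2:ℕ)^d) * 2 ^ e = (Y:ℝ) ^ ((2:ℕ)^d) := by
    rw [div_pow] at key
    rw [Real.rpow_neg (by norm_num), Real.rpow_natCast] at key
    field_simp at key
    linarith [key]
  have hnat : X ^ (2^d) * 2 ^ e = Y ^ (2^d) := by exact_mod_cast key2
  have hcodd : Odd c := ⟨2 * t - 2, by omega⟩
  have hYodd : Odd (Y ^ (2^d)) := (hcodd.pow).pow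
  have heven : 2 ∣ X ^ (2^d) * 2 ^ e := Dvd.dvd.mul_left (dvd_pow_self 2 (by omega)) _
  rw [hnat] at heven
  rw [Nat.odd_iff] at hYodd
  omega
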